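/- Let k be a positive integer, C > 0, and S a set of positive integers whose counting function satisfies S(X) := #{n ≤ X : n ∈ S} = (1+o(1)) (C/(k-1)!) X (log log X)^{k-1} / log X. Then ∫_2^{√X} S(t)/(t^2 log(X/t)) dt = (1+o(1)) (C/k!) (log log X)^k / log X as X → ∞. -/

import Mathlib

open Filter MeasureTheory intervalIntegral

private lemma log_log_tendsto : Tendsto (fun X : ℝ => Real.log (Real.log X)) atTop atTop :=
  Real.tendsto_log_atTop.comp Real.tendsto_log_atTop

private lemma cnt_mono {S : Set ℕ} {cnt : ℝ → ℝ}
    (hcnt : ∀ X : ℝ, cnt X = (Nat.card {n : ℕ | n ∈ S ∧ (n : ℝ) ≤ X} : ℝ)) :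
    Monotone cnt := by
  intro a b hab
  rw [hcnt a, hcnt b]
  have hsub : {n : ℕ | n ∈ S ∧ (n : ℝ) ≤ b} ⊆ Set.Iic ⌊b⌋₊ := by
    intro n hn
    exact Nat.le_floor hn.2
  have hfin : {n : ℕ | n ∈ S ∧ (n : ℝ) ≤ b}.Finite := (Set.finite_Iic ⌊b⌋₊).subset hsub
  have hsub2 : {n : ℕ | n ∈ S ∧ (n : ℝ) ≤ a} ⊆ {n : ℕ | n ∈ S ∧ (n : ℝ) ≤ b} := by
    intro n hn
    exact ⟨hn.1, hn.2.trans hab⟩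
  exact_mod_cast Nat.card_mono hfin hsub2

private lemma integrable_piece {cnt : ℝ → ℝ} (hm : Monotone cnt) {X a b : ℝ}
    (ha : 0 < a) (hab : a ≤ b) (hX : 0 < X)
    (hne : ∀ t ∈ Set.Icc a b, Real.log (X / t) ≠ 0) :
    IntervalIntegrable (fun t => cnt t / (t ^ 2 * Real.log (X / t))) volume a b := by
  have h1 : IntervalIntegrable cnt volume a b := (hm.monotoneOn _).intervalIntegrable
  have h2 : ContinuousOn (fun t : ℝ => (t ^ 2 * Real.log (X / t))⁻¹) (Set.uIcc a b) := by
    rw [Set.uIcc_of_le hab]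
    apply ContinuousOn.inv₀
    · exact ((continuous_pow 2).continuousOn).mul <|
        (continuousOn_const.div continuousOn_id fun t ht => (ha.trans_le ht.1).ne').log
          fun t ht => (div_pos hX (ha.trans_le ht.1)).ne'
    · intro t ht
      exact mul_ne_zero (pow_ne_zero 2 (ha.trans_le ht.1).ne') (hne t ht)
  simpa [div_eq_mul_inv] using h1.mul_continuousOn h2

private lemma integral_P {k : ℕ} (hk : 1 ≤ k) {a b : ℝ} (ha : 2 ≤ a) (hab : a ≤ b) :
    ∫ t in a..b, (Real.log (Real.log t)) ^ (k - 1) / (t * Real.log t)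
      = ((Real.log (Real.log b)) ^ k - (Real.log (Real.log a)) ^ k) / k := by
  have hk0 : (k : ℝ) ≠ 0 := Nat.cast_ne_zero.2 (by omega)
  have key : ∀ x ∈ Set.uIcc a b,
      HasDerivAt (fun t : ℝ => (Real.log (Real.log t)) ^ k / k)
        ((Real.log (Real.log x)) ^ (k - 1) / (x * Real.log x)) x := by
    intro x hx
    rw [Set.uIcc_of_le hab] at hx
    have hx2 : 2 ≤ x := ha.trans hx.1
    have hx0 : x ≠ 0 := by linarith
    have hlx : 0 < Real.log x := Real.log_pos (by linarith)
    have h3 : HasDerivAt (fun t : ℝ => Real.log (Real.log t)) (x⁻¹ / Real.log x) x :=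
      (Real.hasDerivAt_log hx0).log hlx.ne'
    have h4 := (h3.pow k).div_const (k : ℝ)
    refine h4.congr_deriv ?_
    have := hlx.ne'
    field_simp
  have hcont : ContinuousOn (fun t : ℝ => (Real.log (Real.log t)) ^ (k - 1) / (t * Real.log t))
      (Set.uIcc a b) := by
    rw [Set.uIcc_of_le hab]
    have hclog : ContinuousOn Real.log (Set.Icc a b) :=
      Real.continuousOn_log.mono fun t ht => by
        simp only [Set.mem_compl_iff, Set.mem_singleton_iff]
        intro h; rw [h] at ht; linarith [ht.1]
    have hlogne : ∀ t ∈ Set.Icc a b, Real.log t ≠ 0 :=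
      fun t ht => (Real.log_pos (by linarith [ht.1])).ne'
    exact ((hclog.log hlogne).pow _).div (continuousOn_id.mul hclog)
      fun t ht => mul_ne_zero (by intro h; rw [h] at ht; simp at ht; linarith [ht.1]) (hlogne t ht)
  rw [intervalIntegral.integral_eq_sub_of_hasDerivAt key (hcont.intervalIntegrable)]
  ring

private lemma integral_Q (c : ℝ) {a b : ℝ} (ha : 2 ≤ a) (hab : a ≤ b) (hb : Real.log b < c) :
    ∫ t in a..b, 1 / (t * (c - Real.log t))
      = Real.log (c - Real.log a) - Real.log (c - Real.log b) := by
  have key : ∀ x ∈ Set.uIcc a b,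
      HasDerivAt (fun t : ℝ => -Real.log (c - Real.log t)) (1 / (x * (c - Real.log x))) x := by
    intro x hx
    rw [Set.uIcc_of_le hab] at hx
    have hx2 : 2 ≤ x := ha.trans hx.1
    have hx0 : x ≠ 0 := by linarith
    have hcx : 0 < c - Real.log x := by
      have : Real.log x ≤ Real.log b := Real.log_le_log (by linarith) hx.2
      linarith
    have h1 : HasDerivAt (fun t : ℝ => c - Real.log t) (-x⁻¹) x :=
      (Real.hasDerivAt_log hx0).const_sub c
    have h3 := (h1.log hcx.ne').neg
    refine h3.congr_deriv ?_
    have := hcx.ne'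
    field_simp
  have hcont : ContinuousOn (fun t : ℝ => 1 / (t * (c - Real.log t))) (Set.uIcc a b) := by
    rw [Set.uIcc_of_le hab]
    have hclog : ContinuousOn Real.log (Set.Icc a b) :=
      Real.continuousOn_log.mono fun t ht => by
        simp only [Set.mem_compl_iff, Set.mem_singleton_iff]
        intro h; rw [h] at ht; linarith [ht.1]
    refine continuousOn_const.div (continuousOn_id.mul (continuousOn_const.sub hclog))
      fun t ht => mul_ne_zero (by intro h; rw [h] at ht; simp at ht; linarith [ht.1]) ?_
    have : Real.log t ≤ Real.log b := Real.log_le_log (by linarith [ht.1]) ht.2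
    have : 0 < c - Real.log t := by linarith
    exact this.ne'
  rw [intervalIntegral.integral_eq_sub_of_hasDerivAt key (hcont.intervalIntegrable)]
  ring

private lemma div_le_div_of_nonneg_right' {a b c : ℝ} (h : a ≤ b) (hc : 0 < c) :
    a / c ≤ b / c := by gcongr

private lemma sq_bound_low {e d : ℝ} (he : 0 ≤ e) (hd : 0 ≤ d) :
    (1 - 2*e) * d ≤ (1-e) * ((1-e) * d) := by
  nlinarith [mul_nonneg (mul_nonneg he he) hd]

private lemma sq_bound_up {e d : ℝ} (he : 0 ≤ e) (he1 : e ≤ 1) (hd : 0 ≤ d) :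
    (1+e) * ((1+e) * d) ≤ (1 + 3*e) * d := by
  have h1 : e * e ≤ e := mul_le_of_le_one_left he he1
  nlinarith [mul_le_mul_of_nonneg_right h1 hd]

set_option maxHeartbeats 1000000

theorem integral_counting_asymptotic (k : ℕ) (hk : 1 ≤ k) (C : ℝ) (hC : 0 < C)
    (S : Set ℕ) (hS : S ⊆ {n : ℕ | 0 < n})
    (cnt : ℝ → ℝ)
    (hcnt : ∀ X : ℝ, cnt X = (Nat.card {n : ℕ | n ∈ S ∧ (n : ℝ) ≤ X} : ℝ))
    (hasymp : Tendsto (fun X : ℝ =>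
        cnt X / (C / (Nat.factorial (k - 1)) * X * (Real.log (Real.log X)) ^ (k - 1)
          / Real.log X)) atTop (nhds 1)) :
    Tendsto (fun X : ℝ =>
      (∫ t in (2:ℝ)..(Real.sqrt X), cnt t / (t ^ 2 * Real.log (X / t))) /
        (C / (Nat.factorial k) * (Real.log (Real.log X)) ^ k / Real.log X))
      atTop (nhds 1) := by
  have hmono : Monotone cnt := cnt_mono hcnt
  have hcnt0 : ∀ Y : ℝ, 0 ≤ cnt Y := fun Y => by rw [hcnt]; positivity
  set c : ℝ := C / (Nat.factorial (k - 1)) with hcdef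
  have hfactpos : (0:ℝ) < (Nat.factorial (k-1) : ℝ) := by exact_mod_cast Nat.factorial_pos _
  have hfactkpos : (0:ℝ) < (Nat.factorial k : ℝ) := by exact_mod_cast Nat.factorial_pos _
  have hcpos : 0 < c := div_pos hC hfactpos
  have hkR : (0:ℝ) < (k:ℝ) := by exact_mod_cast hk
  have hfact : ((Nat.factorial k : ℝ)) = (k : ℝ) * (Nat.factorial (k - 1) : ℝ) := by
    exact_mod_cast (Nat.mul_factorial_pred (by omega : k ≠ 0)).symm
  have hlog16 : 1 < Real.log 16 := by
    rw [Real.lt_log_iff_exp_lt (by norm_num : (0:ℝ) < 16)]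
    calc Real.exp 1 < 2.7182818286 := Real.exp_one_lt_d9
    _ < 16 := by norm_num
  rw [Metric.tendsto_nhds]
  intro ε0 hε0
  set ε := min (ε0 / 10) (1/2) with hεdef
  have hεpos : 0 < ε := lt_min (by linarith) (by norm_num)
  have hεhalf : ε ≤ 1/2 := min_le_right _ _
  have hεε0 : ε ≤ ε0 / 10 := min_le_left _ _
  -- obtain T₀
  obtain ⟨T₁, hT₁⟩ := eventually_atTop.1 ((Metric.tendsto_nhds.1 hasymp) ε hεpos)
  set T₀ : ℝ := max T₁ 16 with hT₀def
  have hT016 : (16:ℝ) ≤ T₀ := le_max_right _ _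
  -- pointwise density bounds for t ≥ T₀
  have hfpos : ∀ t : ℝ, 16 ≤ t →
      0 < c * t * (Real.log (Real.log t)) ^ (k-1) / Real.log t := by
    intro t ht
    have hlt : 1 < Real.log t := lt_of_lt_of_le hlog16 (Real.log_le_log (by norm_num) ht)
    have hLt : 0 < Real.log (Real.log t) := Real.log_pos hlt
    have : 0 < t := by linarith
    positivity
  have hbound : ∀ t : ℝ, T₀ ≤ t →
      (1 - ε) * (c * t * (Real.log (Real.log t)) ^ (k-1) / Real.log t) ≤ cnt t ∧
      cnt t ≤ (1 + ε) * (c * t * (Real.log (Real.log t)) ^ (k-1) / Real.log t) := by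
    intro t ht
    have hft := hfpos t (hT016.trans ht)
    have h := hT₁ t (le_trans (le_max_left _ _) ht)
    rw [Real.dist_eq, abs_lt] at h
    constructor
    · have h' : 1 - ε < cnt t / (c * t * (Real.log (Real.log t)) ^ (k-1) / Real.log t) := by
        linarith [h.1]
      rw [lt_div_iff₀ hft] at h'
      linarith
    · have h' : cnt t / (c * t * (Real.log (Real.log t)) ^ (k-1) / Real.log t) < 1 + ε := by
        linarith [h.2]
      rw [div_lt_iff₀ hft] at h'
      linarith
  -- lower ratio tendsto
  have hsqeq : ∀ᶠ X : ℝ in atTop,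
      Real.log (Real.log (Real.sqrt X)) = Real.log (Real.log X) - Real.log 2 := by
    filter_upwards [eventually_ge_atTop (4:ℝ)] with X hX
    rw [Real.log_sqrt (by linarith),
      Real.log_div (Real.log_pos (by linarith)).ne' two_ne_zero]
  have hlow : Tendsto (fun X : ℝ =>
      ((Real.log (Real.log (Real.sqrt X)))^k - (Real.log (Real.log T₀))^k)
        / (Real.log (Real.log X))^k) atTop (nhds 1) := by
    have a1 : Tendsto (fun X : ℝ => Real.log 2 / Real.log (Real.log X)) atTop (nhds 0) :=
      tendsto_const_nhds.div_atTop log_log_tendsto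
    have a2 : Tendsto (fun X : ℝ =>
        Real.log (Real.log T₀) / Real.log (Real.log X)) atTop (nhds 0) :=
      tendsto_const_nhds.div_atTop log_log_tendsto
    have c1 : Tendsto (fun _ : ℝ => (1:ℝ)) atTop (nhds 1) := tendsto_const_nhds
    have h2 := ((c1.sub a1).pow k).sub (a2.pow k)
    rw [show ((1:ℝ) - 0)^k - 0^k = 1 by simp [zero_pow (by omega : k ≠ 0)]] at h2
    apply h2.congr'
    filter_upwards [hsqeq, log_log_tendsto.eventually_gt_atTop 0] with X h1 hLX
    rw [h1, show (1 - Real.log 2 / Real.log (Real.log X))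
        = (Real.log (Real.log X) - Real.log 2)/Real.log (Real.log X) by field_simp,
      div_pow, div_pow, div_sub_div_same]
  -- eventual facts
  have ev1 : ∀ᶠ X : ℝ in atTop, T₀^4 ≤ X := eventually_ge_atTop _
  have ev2 : ∀ᶠ X : ℝ in atTop, (k:ℝ) * Real.log 2 ≤ ε * Real.log (Real.log X) := by
    filter_upwards [log_log_tendsto.eventually_ge_atTop ((k:ℝ) * Real.log 2 / ε)] with X hX
    rw [div_le_iff₀ hεpos] at hX
    linarith
  have ev3 : ∀ᶠ X : ℝ in atTop,
      max 1 (T₀ * cnt T₀ * (Nat.factorial k : ℝ) / (C * ε)) ≤ Real.log (Real.log X) :=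
    log_log_tendsto.eventually_ge_atTop _
  have ev4 : ∀ᶠ X : ℝ in atTop, 1 - ε ≤
      ((Real.log (Real.log (Real.sqrt X)))^k - (Real.log (Real.log T₀))^k)
        / (Real.log (Real.log X))^k :=
    hlow.eventually (eventually_ge_nhds (by linarith : 1 - ε < 1))
  have ev5 : ∀ᶠ X : ℝ in atTop, 1 < Real.log X :=
    Real.tendsto_log_atTop.eventually_gt_atTop 1
  filter_upwards [ev1, ev2, ev3, ev4, ev5] with X hX1 hX2 hX3 hX4 hX5
  -- ================== basic facts about X ==================
  set lX := Real.log X with hlXdef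
  set LX := Real.log (Real.log X) with hLXdef
  set sq := Real.sqrt X with hsqdef
  have hT0pos : (0:ℝ) < T₀ := by linarith
  have hX16 : (16:ℝ)^4 ≤ X := le_trans (pow_le_pow_left₀ (by norm_num) hT016 4) hX1
  have hXpos : (0:ℝ) < X := by nlinarith
  have hlXpos : 0 < lX := by linarith
  have hLX1 : 1 ≤ LX := le_trans (le_max_left _ _) hX3
  have hLXpos : 0 < LX := by linarith
  have hsqge : T₀^2 ≤ sq := by
    have h := Real.sqrt_le_sqrt hX1
    rwa [show T₀^4 = (T₀^2)^2 by ring, Real.sqrt_sq (by positivity)] at h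
  have hT0sq : T₀ ≤ sq := le_trans (by nlinarith) hsqge
  have h2T0 : (2:ℝ) ≤ T₀ := by linarith
  have h2sq : (2:ℝ) ≤ sq := by linarith
  have hsqpos : (0:ℝ) < sq := by linarith
  have hsqX : sq ≤ X := by
    have hm : sq * sq = X := Real.mul_self_sqrt hXpos.le
    nlinarith [hsqpos]
  have hlogsq : Real.log sq = lX / 2 := Real.log_sqrt hXpos.le
  have hlogsqpos : 0 < Real.log sq := by rw [hlogsq]; linarith
  -- log (X / t) lower bound
  have hXt : ∀ t : ℝ, 2 ≤ t → t ≤ sq → lX / 2 ≤ Real.log (X / t) := by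
    intro t h2t htsq
    have htpos : (0:ℝ) < t := by linarith
    have h1 : X / sq ≤ X / t := by gcongr
    rw [Real.div_sqrt] at h1
    calc lX / 2 = Real.log sq := hlogsq.symm
    _ ≤ Real.log (X / t) := Real.log_le_log hsqpos h1
  have hXtpos : ∀ t : ℝ, 2 ≤ t → t ≤ sq → 0 < Real.log (X / t) := by
    intro t h2t htsq
    have := hXt t h2t htsq
    linarith
  -- integrability of main integrand on the two pieces
  have int1 : IntervalIntegrable (fun t => cnt t / (t ^ 2 * Real.log (X / t))) volume 2 T₀ :=
    integrable_piece hmono (by norm_num) h2T0 hXpos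
      (fun t ht => (hXtpos t ht.1 (le_trans ht.2 hT0sq)).ne')
  have int2 : IntervalIntegrable (fun t => cnt t / (t ^ 2 * Real.log (X / t))) volume T₀ sq :=
    integrable_piece hmono hT0pos hT0sq hXpos
      (fun t ht => (hXtpos t (le_trans h2T0 ht.1) ht.2).ne')
  have hsplit : (∫ t in (2:ℝ)..sq, cnt t / (t ^ 2 * Real.log (X / t)))
      = (∫ t in (2:ℝ)..T₀, cnt t / (t ^ 2 * Real.log (X / t)))
        + ∫ t in T₀..sq, cnt t / (t ^ 2 * Real.log (X / t)) :=
    (integral_add_adjacent_intervals int1 int2).symm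
  -- ============ chunk 1 bounds ============
  have ch1a : 0 ≤ ∫ t in (2:ℝ)..T₀, cnt t / (t ^ 2 * Real.log (X / t)) := by
    apply intervalIntegral.integral_nonneg h2T0
    intro t ht
    have := hXtpos t ht.1 (le_trans ht.2 hT0sq)
    have ht0 : (0:ℝ) < t := by linarith [ht.1]
    exact div_nonneg (hcnt0 t) (by positivity)
  have ch1b : (∫ t in (2:ℝ)..T₀, cnt t / (t ^ 2 * Real.log (X / t)))
      ≤ T₀ * cnt T₀ / lX := by
    have hmon : (∫ t in (2:ℝ)..T₀, cnt t / (t ^ 2 * Real.log (X / t)))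
        ≤ ∫ _t in (2:ℝ)..T₀, cnt T₀ / (2 * lX) := by
      apply intervalIntegral.integral_mono_on h2T0 int1 intervalIntegrable_const
      intro t ht
      have hlb := hXt t ht.1 (le_trans ht.2 hT0sq)
      have hlXt := hXtpos t ht.1 (le_trans ht.2 hT0sq)
      have ht2 : (2:ℝ) ≤ t := ht.1
      have hden : 2 * lX ≤ t ^ 2 * Real.log (X / t) := by
        have ht4 : (4:ℝ) ≤ t ^ 2 := by nlinarith
        have := mul_le_mul ht4 hlb (by linarith) (by positivity)
        linarith
      exact div_le_div₀ (hcnt0 T₀) (hmono ht.2) (by linarith) hden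
    rw [intervalIntegral.integral_const, smul_eq_mul] at hmon
    have hc0 := hcnt0 T₀
    calc (∫ t in (2:ℝ)..T₀, cnt t / (t ^ 2 * Real.log (X / t)))
        ≤ (T₀ - 2) * (cnt T₀ / (2 * lX)) := hmon
    _ = ((T₀ - 2) * cnt T₀ / 2) / lX := by ring
    _ ≤ T₀ * cnt T₀ / lX := by
        gcongr ?_ / lX
        nlinarith
  -- ============ chunk 2 vs φ ============
  set φ : ℝ → ℝ := fun t => (Real.log (Real.log t)) ^ (k-1)
      / (t * Real.log t * (lX - Real.log t)) with hφdef
  -- pointwise facts on [T₀, sq]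
  have hpt : ∀ t ∈ Set.Icc T₀ sq, 16 ≤ t ∧ 1 < Real.log t ∧ 0 < Real.log (Real.log t)
      ∧ Real.log t ≤ lX / 2 ∧ Real.log (X / t) = lX - Real.log t := by
    intro t ht
    have h16 : (16:ℝ) ≤ t := le_trans hT016 ht.1
    have htpos : (0:ℝ) < t := by linarith
    have hlt : 1 < Real.log t := lt_of_lt_of_le hlog16 (Real.log_le_log (by norm_num) h16)
    have hLt : 0 < Real.log (Real.log t) := Real.log_pos hlt
    have hhalf : Real.log t ≤ lX / 2 := by
      rw [← hlogsq]; exact Real.log_le_log htpos ht.2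
    exact ⟨h16, hlt, hLt, hhalf, Real.log_div hXpos.ne' htpos.ne'⟩
  have hkey : ∀ t ∈ Set.Icc T₀ sq,
      (c * t * (Real.log (Real.log t)) ^ (k-1) / Real.log t) / (t ^ 2 * Real.log (X / t))
        = c * φ t := by
    intro t ht
    obtain ⟨h16, hlt, hLt, hhalf, hlogdiv⟩ := hpt t ht
    have htpos : (0:ℝ) < t := by linarith
    have hlXt : 0 < lX - Real.log t := by linarith
    rw [hlogdiv, hφdef]
    field_simp
  have contφ : ContinuousOn φ (Set.uIcc T₀ sq) := by
    rw [Set.uIcc_of_le hT0sq]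
    have hclog : ContinuousOn Real.log (Set.Icc T₀ sq) :=
      Real.continuousOn_log.mono fun t ht => by
        simp only [Set.mem_compl_iff, Set.mem_singleton_iff]
        intro h; rw [h] at ht; linarith [ht.1]
    have hlogne : ∀ t ∈ Set.Icc T₀ sq, Real.log t ≠ 0 :=
      fun t ht => by have := (hpt t ht).2.1; linarith
    apply ((hclog.log hlogne).pow _).div
      ((continuousOn_id.mul hclog).mul (continuousOn_const.sub hclog))
    intro t ht
    obtain ⟨h16, hlt, hLt, hhalf, _⟩ := hpt t ht
    have htpos : (0:ℝ) < t := by linarith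
    have hlXt : 0 < lX - Real.log t := by linarith
    have hpos : (0:ℝ) < t * Real.log t * (lX - Real.log t) := by positivity
    first
    | exact hpos.ne'
    | simpa using hpos.ne'
  have intφ : IntervalIntegrable φ volume T₀ sq := contφ.intervalIntegrable
  have ch2a : (1 - ε) * (c * ∫ t in T₀..sq, φ t)
      ≤ ∫ t in T₀..sq, cnt t / (t ^ 2 * Real.log (X / t)) := by
    rw [← intervalIntegral.integral_const_mul, ← intervalIntegral.integral_const_mul]
    apply intervalIntegral.integral_mono_on hT0sq (((intφ.const_mul _).const_mul _)) int2
    intro t ht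
    obtain ⟨h16, hlt, hLt, hhalf, hlogdiv⟩ := hpt t ht
    have htpos : (0:ℝ) < t := by linarith
    have hd : 0 < t ^ 2 * Real.log (X / t) := by
      rw [hlogdiv]; have : 0 < lX - Real.log t := by linarith
      positivity
    have h1 := (hbound t ht.1).1
    rw [← hkey t ht, ← mul_div_assoc]
    exact div_le_div_of_nonneg_right' h1 hd
  have ch2b : (∫ t in T₀..sq, cnt t / (t ^ 2 * Real.log (X / t)))
      ≤ (1 + ε) * (c * ∫ t in T₀..sq, φ t) := by
    rw [← intervalIntegral.integral_const_mul, ← intervalIntegral.integral_const_mul]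
    apply intervalIntegral.integral_mono_on hT0sq int2 (((intφ.const_mul _).const_mul _))
    intro t ht
    obtain ⟨h16, hlt, hLt, hhalf, hlogdiv⟩ := hpt t ht
    have htpos : (0:ℝ) < t := by linarith
    have hd : 0 < t ^ 2 * Real.log (X / t) := by
      rw [hlogdiv]; have : 0 < lX - Real.log t := by linarith
      positivity
    have h1 := (hbound t ht.1).2
    rw [← hkey t ht, ← mul_div_assoc]
    exact div_le_div_of_nonneg_right' h1 hd
  -- ============ decompose ∫ φ ============
  set Lsq := Real.log (Real.log sq) with hLsqdef
  set LT0 := Real.log (Real.log T₀) with hLT0def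
  have hφsplit : (∫ t in T₀..sq, φ t) = (1/lX) *
      ((∫ t in T₀..sq, (Real.log (Real.log t)) ^ (k-1) / (t * Real.log t))
       + ∫ t in T₀..sq, (Real.log (Real.log t)) ^ (k-1) * (1 / (t * (lX - Real.log t)))) := by
    have hcont1 : ContinuousOn (fun t : ℝ => (Real.log (Real.log t)) ^ (k-1)
        / (t * Real.log t)) (Set.uIcc T₀ sq) := by
      rw [Set.uIcc_of_le hT0sq]
      have hclog : ContinuousOn Real.log (Set.Icc T₀ sq) :=
        Real.continuousOn_log.mono fun t ht => by
          simp only [Set.mem_compl_iff, Set.mem_singleton_iff]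
          intro h; rw [h] at ht; linarith [ht.1]
      have hlogne : ∀ t ∈ Set.Icc T₀ sq, Real.log t ≠ 0 :=
        fun t ht => by have := (hpt t ht).2.1; linarith
      exact ((hclog.log hlogne).pow _).div (continuousOn_id.mul hclog)
        fun t ht => mul_ne_zero
          (by have h16 := (hpt t ht).1
              have htpos : (0:ℝ) < t := by linarith
              exact htpos.ne')
          (hlogne t ht)
    have hcont2 : ContinuousOn (fun t : ℝ => (Real.log (Real.log t)) ^ (k-1)
        * (1 / (t * (lX - Real.log t)))) (Set.uIcc T₀ sq) := by
      rw [Set.uIcc_of_le hT0sq]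
      have hclog : ContinuousOn Real.log (Set.Icc T₀ sq) :=
        Real.continuousOn_log.mono fun t ht => by
          simp only [Set.mem_compl_iff, Set.mem_singleton_iff]
          intro h; rw [h] at ht; linarith [ht.1]
      have hlogne : ∀ t ∈ Set.Icc T₀ sq, Real.log t ≠ 0 :=
        fun t ht => by have := (hpt t ht).2.1; linarith
      apply ((hclog.log hlogne).pow _).mul
      apply continuousOn_const.div (continuousOn_id.mul (continuousOn_const.sub hclog))
      intro t ht
      obtain ⟨h16, hlt, hLt, hhalf, _⟩ := hpt t ht
      have htpos : (0:ℝ) < t := by linarith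
      have hlXt : 0 < lX - Real.log t := by linarith
      have hpos : (0:ℝ) < t * (lX - Real.log t) := by positivity
      first
      | exact hpos.ne'
      | simpa using hpos.ne'
    rw [← intervalIntegral.integral_add hcont1.intervalIntegrable hcont2.intervalIntegrable,
      ← intervalIntegral.integral_const_mul]
    apply intervalIntegral.integral_congr
    intro t ht
    rw [Set.uIcc_of_le hT0sq] at ht
    obtain ⟨h16, hlt, hLt, hhalf, _⟩ := hpt t ht
    have htpos : (0:ℝ) < t := by linarith
    have hlXt : 0 < lX - Real.log t := by linarith
    have hltne : Real.log t ≠ 0 := by linarith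
    rw [hφdef]
    field_simp
    ring
  have hIP : (∫ t in T₀..sq, (Real.log (Real.log t)) ^ (k-1) / (t * Real.log t))
      = (Lsq^k - LT0^k) / k := integral_P hk h2T0 hT0sq
  have hIQ0 : 0 ≤ ∫ t in T₀..sq,
      (Real.log (Real.log t)) ^ (k-1) * (1 / (t * (lX - Real.log t))) := by
    apply intervalIntegral.integral_nonneg hT0sq
    intro t ht
    obtain ⟨h16, hlt, hLt, hhalf, _⟩ := hpt t ht
    have htpos : (0:ℝ) < t := by linarith
    have hlXt : 0 < lX - Real.log t := by linarith
    positivity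
  have hIQup : (∫ t in T₀..sq,
      (Real.log (Real.log t)) ^ (k-1) * (1 / (t * (lX - Real.log t))))
      ≤ LX^(k-1) * Real.log 2 := by
    have hcontψ : ContinuousOn (fun t : ℝ => 1 / (t * (lX - Real.log t))) (Set.uIcc T₀ sq) := by
      rw [Set.uIcc_of_le hT0sq]
      have hclog : ContinuousOn Real.log (Set.Icc T₀ sq) :=
        Real.continuousOn_log.mono fun t ht => by
          simp only [Set.mem_compl_iff, Set.mem_singleton_iff]
          intro h; rw [h] at ht; linarith [ht.1]
      apply continuousOn_const.div (continuousOn_id.mul (continuousOn_const.sub hclog))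
      intro t ht
      obtain ⟨h16, hlt, hLt, hhalf, _⟩ := hpt t ht
      have htpos : (0:ℝ) < t := by linarith
      have hlXt : 0 < lX - Real.log t := by linarith
      have hpos : (0:ℝ) < t * (lX - Real.log t) := by positivity
      first
      | exact hpos.ne'
      | simpa using hpos.ne'
    have hclog2 : ContinuousOn Real.log (Set.Icc T₀ sq) :=
      Real.continuousOn_log.mono fun t ht => by
        simp only [Set.mem_compl_iff, Set.mem_singleton_iff]
        intro h; rw [h] at ht; linarith [ht.1]
    have hlogne2 : ∀ t ∈ Set.Icc T₀ sq, Real.log t ≠ 0 :=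
      fun t ht => by have := (hpt t ht).2.1; linarith
    have hcontQ : ContinuousOn (fun t : ℝ => (Real.log (Real.log t)) ^ (k-1)
        * (1 / (t * (lX - Real.log t)))) (Set.uIcc T₀ sq) := by
      apply ContinuousOn.mul _ hcontψ
      rw [Set.uIcc_of_le hT0sq]
      exact (hclog2.log hlogne2).pow _
    have step1 : (∫ t in T₀..sq,
        (Real.log (Real.log t)) ^ (k-1) * (1 / (t * (lX - Real.log t))))
        ≤ ∫ t in T₀..sq, LX^(k-1) * (1 / (t * (lX - Real.log t))) := by
      apply intervalIntegral.integral_mono_on hT0sq hcontQ.intervalIntegrable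
        (hcontψ.intervalIntegrable.const_mul _)
      intro t ht
      obtain ⟨h16, hlt, hLt, hhalf, _⟩ := hpt t ht
      have htpos : (0:ℝ) < t := by linarith
      have hlXt : 0 < lX - Real.log t := by linarith
      have hLL : Real.log (Real.log t) ≤ LX := by
        have h1 : Real.log t ≤ lX := Real.log_le_log htpos (le_trans ht.2 hsqX)
        exact Real.log_le_log (by linarith) h1
      have hψ : 0 ≤ 1 / (t * (lX - Real.log t)) := by positivity
      exact mul_le_mul_of_nonneg_right (pow_le_pow_left₀ hLt.le hLL _) hψ
    have step2 : (∫ t in T₀..sq, LX^(k-1) * (1 / (t * (lX - Real.log t))))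
        = LX^(k-1) * (Real.log (lX - Real.log T₀) - Real.log (lX - Real.log sq)) := by
      rw [intervalIntegral.integral_const_mul,
        integral_Q lX h2T0 hT0sq (by rw [hlogsq]; linarith)]
    have step3 : Real.log (lX - Real.log T₀) - Real.log (lX - Real.log sq) ≤ Real.log 2 := by
      have hlogT0pos : 0 < Real.log T₀ := Real.log_pos (by linarith)
      have hT0half : Real.log T₀ ≤ lX / 2 := by
        rw [← hlogsq]; exact Real.log_le_log hT0pos hT0sq
      have h1 : Real.log (lX - Real.log T₀) ≤ Real.log lX :=
        Real.log_le_log (by linarith) (by linarith)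
      have h2 : Real.log (lX - Real.log sq) = Real.log lX - Real.log 2 := by
        rw [hlogsq, show lX - lX / 2 = lX / 2 by ring,
          Real.log_div hlXpos.ne' two_ne_zero]
      linarith
    calc (∫ t in T₀..sq, (Real.log (Real.log t)) ^ (k-1) * (1 / (t * (lX - Real.log t))))
        ≤ LX^(k-1) * (Real.log (lX - Real.log T₀) - Real.log (lX - Real.log sq)) := by
          rw [← step2]; exact step1
    _ ≤ LX^(k-1) * Real.log 2 := by
          apply mul_le_mul_of_nonneg_left step3 (by positivity)
  -- ============ bounds on ∫ φ ============
  have hlX4 : (4:ℝ) < lX := by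
    have h1 : Real.log ((16:ℝ)^4) ≤ lX := Real.log_le_log (by positivity) hX16
    rw [Real.log_pow] at h1
    push_cast at h1
    linarith [hlog16]
  have hLsqpos : 0 < Lsq := by
    rw [hLsqdef]
    apply Real.log_pos
    rw [hlogsq]
    linarith
  have hLT0pos : 0 < LT0 := by
    rw [hLT0def]
    exact Real.log_pos (lt_of_lt_of_le hlog16 (Real.log_le_log (by norm_num) hT016))
  have hLsqLX : Lsq ≤ LX := by
    rw [hLsqdef]
    apply Real.log_le_log hlogsqpos
    rw [hlogsq]
    linarith
  have hIφlow : (Lsq^k - LT0^k) / ((k:ℝ) * lX) ≤ ∫ t in T₀..sq, φ t := by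
    rw [hφsplit, hIP]
    have heq : (Lsq^k - LT0^k) / ((k:ℝ) * lX) = (1/lX) * ((Lsq^k - LT0^k) / k) := by
      rw [div_mul_div_comm, one_mul, mul_comm lX ((k:ℝ))]
    rw [heq]
    have hadd : (Lsq ^ k - LT0 ^ k) / (k:ℝ) ≤ (Lsq ^ k - LT0 ^ k) / (k:ℝ)
        + ∫ t in T₀..sq, (Real.log (Real.log t)) ^ (k-1) * (1 / (t * (lX - Real.log t))) :=
      le_add_of_nonneg_right hIQ0
    have := mul_le_mul_of_nonneg_left hadd (by positivity : (0:ℝ) ≤ 1/lX)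
    linarith
  have hIφup : (∫ t in T₀..sq, φ t) ≤ (1/lX) * (LX^k / k + LX^(k-1) * Real.log 2) := by
    rw [hφsplit, hIP]
    apply mul_le_mul_of_nonneg_left _ (by positivity : (0:ℝ) ≤ 1/lX)
    have h1 : Lsq^k ≤ LX^k := pow_le_pow_left₀ hLsqpos.le hLsqLX k
    have h2 : (0:ℝ) ≤ LT0^k := by positivity
    have h3 : (Lsq^k - LT0^k)/(k:ℝ) ≤ LX^k / k := by
      apply div_le_div_of_nonneg_right' (by linarith) hkR
    linarith [hIQup]
  -- ============ final assembly ============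
  set D := C / (Nat.factorial k : ℝ) * LX ^ k / lX with hDdef
  have hDpos : 0 < D :=
    div_pos (mul_pos (div_pos hC hfactkpos) (pow_pos hLXpos k)) hlXpos
  have hED : c * ((LX^k) / ((k:ℝ) * lX)) = D := by
    rw [hDdef, hcdef, hfact]
    rw [mul_comm ((k:ℝ)) ((Nat.factorial (k-1) : ℝ))]
    field_simp
  -- lower bound for g
  have hX4' : (1 - ε) * LX^k ≤ Lsq^k - LT0^k := by
    rw [← le_div_iff₀ (by positivity : (0:ℝ) < LX^k)]
    exact hX4
  have glow : (1 - 2*ε) * D ≤ (∫ t in (2:ℝ)..sq, cnt t / (t ^ 2 * Real.log (X / t))) := by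
    have h1 : (1-ε) * (c * ((Lsq^k - LT0^k) / ((k:ℝ) * lX)))
        ≤ (1-ε) * (c * ∫ t in T₀..sq, φ t) := by
      apply mul_le_mul_of_nonneg_left _ (by linarith : (0:ℝ) ≤ 1-ε)
      exact mul_le_mul_of_nonneg_left hIφlow hcpos.le
    have h2 : (1-ε) * ((1-ε) * (c * (LX^k / ((k:ℝ) * lX))))
        ≤ (1-ε) * (c * ((Lsq^k - LT0^k) / ((k:ℝ) * lX))) := by
      apply mul_le_mul_of_nonneg_left _ (by linarith : (0:ℝ) ≤ 1-ε)
      have : (1-ε) * (LX^k / ((k:ℝ) * lX)) ≤ (Lsq^k - LT0^k) / ((k:ℝ) * lX) := by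
        rw [show (1-ε) * (LX^k / ((k:ℝ) * lX)) = ((1-ε) * LX^k) / ((k:ℝ) * lX) by ring]
        exact div_le_div_of_nonneg_right' hX4' (by positivity)
      calc (1-ε) * (c * (LX^k / ((k:ℝ) * lX))) = c * ((1-ε) * (LX^k / ((k:ℝ) * lX))) := by ring
      _ ≤ c * ((Lsq^k - LT0^k) / ((k:ℝ) * lX)) := mul_le_mul_of_nonneg_left this hcpos.le
    rw [hED] at h2
    rw [hsplit]
    have hfin : (1 - 2*ε) * D ≤ (1-ε) * ((1-ε) * D) := sq_bound_low hεpos.le hDpos.le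
    linarith [ch1a, ch2a]
  -- upper bound for g
  have hpowk : LX^k = LX^(k-1) * LX := by
    conv_lhs => rw [show k = (k-1)+1 by omega]
    rw [pow_succ]
  have hQb : LX^(k-1) * Real.log 2 ≤ ε * LX^k / (k:ℝ) := by
    have h1 : LX^(k-1) * ((k:ℝ) * Real.log 2) ≤ LX^(k-1) * (ε * LX) :=
      mul_le_mul_of_nonneg_left hX2 (by positivity)
    rw [le_div_iff₀ hkR, hpowk]
    linarith [h1]
  have gup : (∫ t in (2:ℝ)..sq, cnt t / (t ^ 2 * Real.log (X / t))) ≤ (1 + 4*ε) * D := by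
    have h1 : (∫ t in T₀..sq, cnt t / (t ^ 2 * Real.log (X / t)))
        ≤ (1+ε) * (c * ((1/lX) * (LX^k / k + LX^(k-1) * Real.log 2))) := by
      refine le_trans ch2b ?_
      apply mul_le_mul_of_nonneg_left _ (by linarith : (0:ℝ) ≤ 1+ε)
      exact mul_le_mul_of_nonneg_left hIφup hcpos.le
    have h2 : c * ((1/lX) * (LX^k / k + LX^(k-1) * Real.log 2)) ≤ (1+ε) * D := by
      have h3 : (1/lX) * (LX^k / k + LX^(k-1) * Real.log 2)
          ≤ (1/lX) * ((1+ε) * (LX^k / k)) := by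
        apply mul_le_mul_of_nonneg_left _ (by positivity : (0:ℝ) ≤ 1/lX)
        have expand : (1+ε)*(LX^k/(k:ℝ)) = LX^k/(k:ℝ) + ε*LX^k/(k:ℝ) := by ring
        rw [expand]
        linarith [hQb]
      calc c * ((1/lX) * (LX^k / k + LX^(k-1) * Real.log 2))
          ≤ c * ((1/lX) * ((1+ε) * (LX^k / k))) := mul_le_mul_of_nonneg_left h3 hcpos.le
      _ = (1+ε) * (c * (LX^k / ((k:ℝ) * lX))) := by ring
      _ = (1+ε) * D := by rw [hED]
    have h4 : (∫ t in (2:ℝ)..T₀, cnt t / (t ^ 2 * Real.log (X / t))) ≤ ε * D := by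
      refine le_trans ch1b ?_
      have hLXge : T₀ * cnt T₀ * (Nat.factorial k : ℝ) / (C * ε) ≤ LX :=
        le_trans (le_max_right _ _) hX3
      have hLXk : LX ≤ LX^k := le_self_pow₀ hLX1 (by omega)
      rw [div_le_iff₀ (by positivity)] at hLXge
      have hnum : T₀ * cnt T₀ ≤ ε * (C / (Nat.factorial k : ℝ) * LX^k) := by
        rw [show ε * (C / (Nat.factorial k : ℝ) * LX^k)
            = LX^k * (C * ε) / (Nat.factorial k : ℝ) by ring, le_div_iff₀ hfactkpos]
        have : LX * (C * ε) ≤ LX^k * (C * ε) :=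
          mul_le_mul_of_nonneg_right hLXk (by positivity)
        linarith
      calc T₀ * cnt T₀ / lX ≤ ε * (C / (Nat.factorial k : ℝ) * LX^k) / lX :=
            div_le_div_of_nonneg_right' hnum hlXpos
      _ = ε * D := by rw [hDdef]; ring
    have hmulup : (1+ε) * ((1+ε) * D) ≤ (1 + 3*ε) * D :=
      sq_bound_up hεpos.le (by linarith) hDpos.le
    rw [hsplit]
    have hstep := mul_le_mul_of_nonneg_left h2 (by linarith : (0:ℝ) ≤ 1+ε)
    linarith [h1, h4, hstep, hmulup]
  -- conclude
  have hgD1 : 1 - 2*ε ≤ (∫ t in (2:ℝ)..sq, cnt t / (t ^ 2 * Real.log (X / t))) / D := by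
    rw [le_div_iff₀ hDpos]
    linarith [glow]
  have hgD2 : (∫ t in (2:ℝ)..sq, cnt t / (t ^ 2 * Real.log (X / t))) / D ≤ 1 + 4*ε := by
    rw [div_le_iff₀ hDpos]
    linarith [gup]
  rw [Real.dist_eq, abs_lt]
  constructor <;> [linarith; linarith]
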